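/- Let p be a prime number (or any real number p > 1), let m and l be natural numbers, and let χ be any complex number. For s ∈ ℂ with p^{3−4s} ≠ 1 and p^{4s−3} ≠ 1, define F(s) = [ p^{(2−2s)m + 3/2 − 2s} / (1 − p^{3−4s}) ] · ( 1 − p^{(3−4s)·l} − χ · p^{1−2s} · (1 − p^{(3−4s)·(l−1)}) ), where the exponent (3−4s)·(l−1) uses l−1 as an integer (possibly −1). Then the function s ↦ p^{2(m+l)s} · F(s) is invariant under s ↦ 3/2 − s; that is, p^{2(m+l)s} · F(s) = p^{2(m+l)(3/2−s)} · F(3/2 − s). Equivalently, F(3/2 − s) = p^{(4s−3)(m+l)} · F(s). -/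

import Mathlib

open Complex

/-- The degree-2 ramified local Siegel series factor `F_N^{(p)}(p^{-2s})`. -/
noncomputable def siegelFactor (p : ℝ) (m l : ℕ) (χ : ℂ) (s : ℂ) : ℂ :=
  (p : ℂ) ^ ((2 - 2 * s) * (m : ℂ) + 3 / 2 - 2 * s) / (1 - (p : ℂ) ^ (3 - 4 * s)) *
    (1 - (p : ℂ) ^ ((3 - 4 * s) * (l : ℂ)) -
      χ * (p : ℂ) ^ (1 - 2 * s) * (1 - (p : ℂ) ^ ((3 - 4 * s) * ((l : ℂ) - 1))))

theorem stmt_15 (p : ℝ) (hp : 1 < p) (m l : ℕ) (χ : ℂ) (s : ℂ)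
    (h1 : (p : ℂ) ^ (3 - 4 * s) ≠ 1) (h2 : (p : ℂ) ^ (4 * s - 3) ≠ 1) :
    (p : ℂ) ^ (2 * ((m : ℂ) + (l : ℂ)) * s) * siegelFactor p m l χ s =
      (p : ℂ) ^ (2 * ((m : ℂ) + (l : ℂ)) * (3 / 2 - s)) *
        siegelFactor p m l χ (3 / 2 - s) := by
  have hq : (p : ℂ) ≠ 0 := by
    simp only [ne_eq, Complex.ofReal_eq_zero]; nlinarith
  set q : ℂ := (p : ℂ) with hqdef
  have hadd : ∀ x y : ℂ, q ^ (x + y) = q ^ x * q ^ y := fun x y => cpow_add x y hq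
  set w : ℂ := q ^ (1 - 2 * s) with hwdef
  set r : ℂ := q ^ ((1 : ℂ)/2) with hrdef
  have hw0 : w ≠ 0 := fun h => hq ((cpow_eq_zero_iff _ _).mp h).1
  have hr0 : r ≠ 0 := fun h => hq ((cpow_eq_zero_iff _ _).mp h).1
  have ha0 : q * w ^ 2 ≠ 0 := mul_ne_zero hq (pow_ne_zero _ hw0)
  have hT3 : q ^ (3 - 4 * s) = q * w ^ 2 := by
    rw [show (3 : ℂ) - 4 * s = 1 + ((1 - 2 * s) + (1 - 2 * s)) by ring, hadd, hadd,
      cpow_one, ← hwdef]; ring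
  have hT3' : q ^ (3 - 4 * (3/2 - s) : ℂ) = (q * w ^ 2)⁻¹ := by
    rw [show (3 : ℂ) - 4 * (3/2 - s) = -(3 - 4 * s) by ring, cpow_neg, hT3]
  have hT4 : q ^ ((3 - 4 * s) * (l : ℂ)) = (q * w ^ 2) ^ l := by
    rw [show (3 - 4 * s) * (l : ℂ) = (l : ℂ) * (3 - 4 * s) by ring, cpow_nat_mul, hT3]
  have hT4' : q ^ ((3 - 4 * (3/2 - s)) * (l : ℂ)) = ((q * w ^ 2) ^ l)⁻¹ := by
    rw [show (3 - 4 * (3/2 - s)) * (l : ℂ) = ((-(l : ℤ) : ℤ) : ℂ) * (3 - 4 * s) by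
        push_cast; ring, cpow_int_mul, hT3, zpow_neg, zpow_natCast]
  have hT6 : q ^ ((3 - 4 * s) * ((l : ℂ) - 1)) = (q * w ^ 2) ^ l * (q * w ^ 2)⁻¹ := by
    rw [show (3 - 4 * s) * ((l : ℂ) - 1) = (((l : ℤ) - 1 : ℤ) : ℂ) * (3 - 4 * s) by
        push_cast; ring, cpow_int_mul, hT3, zpow_sub_one₀ ha0, zpow_natCast]
  have hT6' : q ^ ((3 - 4 * (3/2 - s)) * ((l : ℂ) - 1)) =
      (q * w ^ 2) * ((q * w ^ 2) ^ l)⁻¹ := by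
    rw [show (3 - 4 * (3/2 - s)) * ((l : ℂ) - 1) = ((1 - (l : ℤ) : ℤ) : ℂ) * (3 - 4 * s) by
        push_cast; ring, cpow_int_mul, hT3, zpow_sub₀ ha0, zpow_one, zpow_natCast]
    ring
  have hT5' : q ^ (1 - 2 * (3/2 - s) : ℂ) = (q * w)⁻¹ := by
    rw [show (1 : ℂ) - 2 * (3/2 - s) = -(1 + (1 - 2 * s)) by ring, cpow_neg, hadd,
      cpow_one, ← hwdef]
  have hT2 : q ^ ((2 - 2 * s) * (m : ℂ) + 3 / 2 - 2 * s) = (q * w) ^ m * (w * r) := by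
    rw [show (2 - 2 * s) * (m : ℂ) + 3 / 2 - 2 * s
        = (m : ℂ) * (1 + (1 - 2 * s)) + ((1 - 2 * s) + 1/2) by ring, hadd, hadd,
      cpow_nat_mul, hadd, cpow_one, ← hwdef, ← hrdef]
  have hT2' : q ^ ((2 - 2 * (3/2 - s)) * (m : ℂ) + 3 / 2 - 2 * (3/2 - s)) =
      (w⁻¹) ^ m * (w * r)⁻¹ := by
    rw [show (2 - 2 * (3/2 - s)) * (m : ℂ) + 3 / 2 - 2 * (3/2 - s)
        = (m : ℂ) * (-(1 - 2 * s)) + (-((1 - 2 * s) + 1/2)) by ring, hadd,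
      cpow_nat_mul, cpow_neg, cpow_neg, hadd, ← hwdef, ← hrdef]
  have hT1 : q ^ (2 * ((m : ℂ) + (l : ℂ)) * s) = (q * w⁻¹) ^ (m + l) := by
    rw [show 2 * ((m : ℂ) + (l : ℂ)) * s = ((m + l : ℕ) : ℂ) * (1 + -(1 - 2 * s)) by
        push_cast; ring, cpow_nat_mul, hadd, cpow_one, cpow_neg, ← hwdef]
  have hT1' : q ^ (2 * ((m : ℂ) + (l : ℂ)) * (3/2 - s)) = (q * q * w) ^ (m + l) := by
    rw [show 2 * ((m : ℂ) + (l : ℂ)) * (3/2 - s) = ((m + l : ℕ) : ℂ) * (1 + (1 + (1 - 2 * s))) by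
        push_cast; ring, cpow_nat_mul, hadd, hadd, cpow_one, ← hwdef, ← mul_assoc]
  have ha1 : 1 - q * w ^ 2 ≠ 0 := by
    rw [← hT3]; exact sub_ne_zero.mpr (Ne.symm h1)
  have ha2 : 1 - (q * w ^ 2)⁻¹ ≠ 0 := by
    rw [← hT3, ← cpow_neg, show -(3 - 4 * s) = 4 * s - 3 by ring]
    exact sub_ne_zero.mpr (Ne.symm h2)
  have hl0 : (q * w ^ 2) ^ l ≠ 0 := pow_ne_zero _ ha0
  simp only [siegelFactor, ← hqdef, hT1, hT1', hT2, hT2', hT3, hT3', hT4, hT4', ← hwdef,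
    hT5', hT6, hT6']
  simp only [div_eq_mul_inv]
  have hinv : (1 - (q * w ^ 2)⁻¹)⁻¹ = -(q * w ^ 2) * (1 - q * w ^ 2)⁻¹ := by
    rw [show 1 - (q * w ^ 2)⁻¹ = -(1 - q * w ^ 2) * (q * w ^ 2)⁻¹ by field_simp; ring]
    rw [mul_inv, inv_inv, inv_neg]
    ring
  rw [hinv]
  set I : ℂ := (1 - q * w ^ 2)⁻¹ with hI
  clear_value I
  have e1 : (q * w ^ 2) ^ l = q ^ l * (w ^ l) ^ 2 := by
    rw [mul_pow, ← pow_mul, mul_comm 2 l, pow_mul]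
  have e2 : (q * w) ^ m = q ^ m * w ^ m := mul_pow q w m
  have e3 : (q * w⁻¹) ^ (m + l) = q ^ m * q ^ l * ((w ^ m)⁻¹ * (w ^ l)⁻¹) := by
    rw [mul_pow, pow_add, inv_pow, pow_add, mul_inv]
  have e4 : (q * q * w) ^ (m + l) = q ^ m * q ^ l * (q ^ m * q ^ l) * (w ^ m * w ^ l) := by
    rw [mul_pow, mul_pow, pow_add, pow_add]
  have e5 : w⁻¹ ^ m = (w ^ m)⁻¹ := inv_pow w m
  simp only [e1, e2, e3, e4, e5]
  have hQl : q ^ l ≠ 0 := pow_ne_zero _ hq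
  have hWl : w ^ l ≠ 0 := pow_ne_zero _ hw0
  have hQm : q ^ m ≠ 0 := pow_ne_zero _ hq
  have hWm : w ^ m ≠ 0 := pow_ne_zero _ hw0
  set A : ℂ := q ^ l with hA; clear_value A
  set B : ℂ := w ^ l with hB; clear_value B
  set C : ℂ := q ^ m with hC; clear_value C
  set M : ℂ := w ^ m with hM; clear_value M
  have hr2 : q = r ^ 2 := by
    rw [hrdef, sq, ← hadd, show (1 : ℂ)/2 + 1/2 = 1 by norm_num, cpow_one]
  rw [hr2]
  clear_value w r
  field_simp
  have hJ : A ^ 2 * M * w ^ 2 * r ^ 3 * B ^ 4 *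
      (A⁻¹ ^ 2 * M⁻¹ * w⁻¹ ^ 2 * r⁻¹ ^ 3 * B⁻¹ ^ 4) = 1 := by
    simp only [inv_pow]
    field_simp
  ring
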